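/- For any p ∈ [1, ∞), any radius ε ≥ 0, any nominal probability distribution P̂_N supported on a closed set Ξ ⊆ ℝ^m, and any loss function ℓ : ℝ^m → ℝ ∪ {∞} that is upper semicontinuous and P̂_N-integrable, the worst-case risk is bounded above by the Lipschitz-regularized nominal risk: sup_{Q ∈ 𝔹_{ε,p}(P̂_N)} E^Q[ℓ(ξ)] ≤ E^{P̂_N}[ℓ(ξ)] + ε · Lip(ℓ), where Lip(ℓ) = sup_{ξ ≠ ξ'} |ℓ(ξ) − ℓ(ξ')| / ‖ξ − ξ'‖. -/

import Mathlib

open MeasureTheory Filter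
open scoped ENNReal NNReal BigOperators Classical Matrix

noncomputable section

namespace WDro

variable {m : ℕ}

/-- Axioms for an abstract norm `nrm` on `ℝ^m`. -/
structure IsNorm (nrm : (Fin m → ℝ) → ℝ) : Prop where
  eq_zero_iff : ∀ x, nrm x = 0 ↔ x = 0
  triangle : ∀ x y, nrm (x + y) ≤ nrm x + nrm y
  homog : ∀ (c : ℝ) (x : Fin m → ℝ), nrm (c • x) = |c| * nrm x

/-- The Euclidean norm on `ℝ^m`. -/
def eucNorm (x : Fin m → ℝ) : ℝ := Real.sqrt (x ⬝ᵥ x)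

/-- The dual norm `‖z‖_* = sup_{‖ξ‖ ≤ 1} z^⊤ ξ`. -/
def dualNorm (nrm : (Fin m → ℝ) → ℝ) (z : Fin m → ℝ) : ℝ :=
  sSup {r : ℝ | ∃ ξ : Fin m → ℝ, nrm ξ ≤ 1 ∧ r = z ⬝ᵥ ξ}

/-- The set of couplings of `Q` and `Q'`: joint distributions with the given marginals. -/
def Couplings {α : Type*} [MeasurableSpace α] (Q Q' : Measure α) : Set (Measure (α × α)) :=
  {π | IsProbabilityMeasure π ∧ π.map Prod.fst = Q ∧ π.map Prod.snd = Q'}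

/-- The type-`p` Wasserstein distance with transportation cost `nrm (ξ - ξ') ^ p`. -/
def Wp (nrm : (Fin m → ℝ) → ℝ) (p : ℝ) (Q Q' : Measure (Fin m → ℝ)) : ℝ≥0∞ :=
  (⨅ π ∈ Couplings Q Q', ∫⁻ ξ, ENNReal.ofReal (nrm (ξ.1 - ξ.2) ^ p) ∂π) ^ (1 / p)

/-- The type-`p` Wasserstein ball of radius `ε` around `P`, within distributions on `Ξ`. -/
def WBall (nrm : (Fin m → ℝ) → ℝ) (p ε : ℝ) (Ξ : Set (Fin m → ℝ))
    (P : Measure (Fin m → ℝ)) : Set (Measure (Fin m → ℝ)) :=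
  {Q | IsProbabilityMeasure Q ∧ Q Ξᶜ = 0 ∧ Wp nrm p Q P ≤ ENNReal.ofReal ε}

/-- Positive part of an extended real number, as an extended nonnegative real. -/
def epos (x : EReal) : ℝ≥0∞ := if x = ⊤ then ⊤ else ENNReal.ofReal x.toReal

/-- Canonical map from `ℝ≥0∞` to `EReal`. -/
def ennToE (x : ℝ≥0∞) : EReal := if x = ⊤ then ⊤ else ((x.toReal : ℝ) : EReal)

/-- Expectation of an extended-real-valued loss under `Q`, with the convention that the
expectation is `+∞` whenever the positive part has infinite integral. -/
def eexp {α : Type*} [MeasurableSpace α] (Q : Measure α) (ℓ : α → EReal) : EReal :=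
  if (∫⁻ x, epos (ℓ x) ∂Q) = ⊤ then ⊤
  else if (∫⁻ x, epos (-(ℓ x)) ∂Q) = ⊤ then ⊥
  else (((∫⁻ x, epos (ℓ x) ∂Q).toReal - (∫⁻ x, epos (-(ℓ x)) ∂Q).toReal : ℝ) : EReal)

/-- Integrability of an extended-real-valued loss under `Q`. -/
def IntegrableE {α : Type*} [MeasurableSpace α] (Q : Measure α) (ℓ : α → EReal) : Prop :=
  Measurable ℓ ∧ (∫⁻ x, epos (ℓ x) ∂Q) ≠ ⊤ ∧ (∫⁻ x, epos (-(ℓ x)) ∂Q) ≠ ⊤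

/-- Lipschitz modulus of an extended-real-valued function with respect to `nrm`. -/
def lipModE (nrm : (Fin m → ℝ) → ℝ) (ℓ : (Fin m → ℝ) → EReal) : ℝ≥0∞ :=
  ⨆ (x : Fin m → ℝ) (y : Fin m → ℝ) (_ : x ≠ y),
    epos (ℓ x - ℓ y) / ENNReal.ofReal (nrm (x - y))

/-- Lipschitz modulus of a real-valued function with respect to `nrm`. -/
def lipMod (nrm : (Fin m → ℝ) → ℝ) (φ : (Fin m → ℝ) → ℝ) : ℝ≥0∞ :=
  ⨆ (x : Fin m → ℝ) (y : Fin m → ℝ) (_ : x ≠ y),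
    ENNReal.ofReal (|φ x - φ y| / nrm (x - y))

/-- The empirical distribution on `N` samples. -/
def empirical (N : ℕ) (xs : Fin N → (Fin m → ℝ)) : Measure (Fin m → ℝ) :=
  (N : ℝ≥0∞)⁻¹ • ∑ i, Measure.dirac (xs i)

/-- The mean vector of a distribution on `ℝ^m`. -/
def meanVec (Q : Measure (Fin m → ℝ)) : Fin m → ℝ := fun i => ∫ x, x i ∂Q

/-- The covariance matrix of a distribution on `ℝ^m`. -/
def covMatrix (Q : Measure (Fin m → ℝ)) : Matrix (Fin m) (Fin m) ℝ :=
  Matrix.of fun i j => ∫ x, (x i - meanVec Q i) * (x j - meanVec Q j) ∂Q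

/-- The positive semidefinite square root of a matrix (junk value `0` off the PSD cone). -/
def psdSqrt (A : Matrix (Fin m) (Fin m) ℝ) : Matrix (Fin m) (Fin m) ℝ :=
  if h : A.PosSemidef then
    (h.1.eigenvectorUnitary : Matrix (Fin m) (Fin m) ℝ) *
      Matrix.diagonal (Real.sqrt ∘ h.1.eigenvalues) *
      (star h.1.eigenvectorUnitary : Matrix (Fin m) (Fin m) ℝ)
  else 0

/-- The mean-covariance uncertainty set `𝒰_ε(μ̂, Σ̂)`. -/
def Uset (ε : ℝ) (muh : Fin m → ℝ) (Sh : Matrix (Fin m) (Fin m) ℝ) :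
    Set ((Fin m → ℝ) × Matrix (Fin m) (Fin m) ℝ) :=
  {p | p.2.PosSemidef ∧
    eucNorm (muh - p.1) ^ 2 +
      (Sh + p.2 - (2 : ℝ) • psdSqrt (psdSqrt Sh * p.2 * psdSqrt Sh)).trace ≤ ε ^ 2}

/-- The first- and second-order moment uncertainty set `𝒱_ε(μ̂, Σ̂)`. -/
def Vset (ε : ℝ) (muh : Fin m → ℝ) (Sh : Matrix (Fin m) (Fin m) ℝ) :
    Set ((Fin m → ℝ) × Matrix (Fin m) (Fin m) ℝ) :=
  {p | p.2.PosSemidef ∧ (p.1, p.2 - Matrix.vecMulVec p.1 p.1) ∈ Uset ε muh Sh}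

/-- The Gelbrich hull `𝔾_ε(μ̂, Σ̂)` of distributions on `Ξ`. -/
def GHull (ε : ℝ) (muh : Fin m → ℝ) (Sh : Matrix (Fin m) (Fin m) ℝ)
    (Ξ : Set (Fin m → ℝ)) : Set (Measure (Fin m → ℝ)) :=
  {Q | IsProbabilityMeasure Q ∧ Q Ξᶜ = 0 ∧ Integrable (fun x => x ⬝ᵥ x) Q ∧
    (meanVec Q, covMatrix Q) ∈ Uset ε muh Sh}

/-- `Q` is the elliptical distribution `ℰ_g(μ, Σ)`. -/
def IsElliptical (g : ℝ → ℝ) (mu : Fin m → ℝ) (Sh : Matrix (Fin m) (Fin m) ℝ)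
    (Q : Measure (Fin m → ℝ)) : Prop :=
  IsProbabilityMeasure Q ∧ (∀ u : ℝ, 0 ≤ u → 0 ≤ g u) ∧
    Integrable (fun x => x ⬝ᵥ x) Q ∧ meanVec Q = mu ∧ covMatrix Q = Sh ∧
    ∃ C : ℝ, 0 < C ∧
      Q = volume.withDensity
        (fun ξ => ENNReal.ofReal (C * (Sh.det)⁻¹ * g ((ξ - mu) ⬝ᵥ (Sh⁻¹).mulVec (ξ - mu))))

/-- The symmetric block matrix `[[A, b], [bᵀ, c]]`. -/
def blockM (A : Matrix (Fin m) (Fin m) ℝ) (b : Fin m → ℝ) (c : ℝ) :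
    Matrix (Fin m ⊕ Unit) (Fin m ⊕ Unit) ℝ :=
  Matrix.fromBlocks A (Matrix.of fun i (_ : Unit) => b i)
    (Matrix.of fun (_ : Unit) j => b j) (Matrix.of fun (_ : Unit) (_ : Unit) => c)

/-- The largest eigenvalue of a (symmetric) matrix. -/
def lambdaMax (Q : Matrix (Fin m) (Fin m) ℝ) : ℝ :=
  sSup {r : ℝ | ∃ v : Fin m → ℝ, v ≠ 0 ∧ Q.mulVec v = r • v}

/-- Convexity of an extended-real-valued function. -/
def ConvexE (f : (Fin m → ℝ) → EReal) : Prop :=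
  ∀ x y : Fin m → ℝ, ∀ t : ℝ, 0 ≤ t → t ≤ 1 →
    f (t • x + (1 - t) • y) ≤ (t : EReal) * f x + ((1 - t : ℝ) : EReal) * f y

/-- The convex conjugate of an extended-real-valued function. -/
def conjE (f : (Fin m → ℝ) → EReal) (z : Fin m → ℝ) : EReal :=
  ⨆ ξ : Fin m → ℝ, (((z ⬝ᵥ ξ) : ℝ) : EReal) - f ξ

/-- The support function of a set `Ξ ⊆ ℝ^m`. -/
def suppFnE (Ξ : Set (Fin m → ℝ)) (z : Fin m → ℝ) : EReal :=
  ⨆ ξ : Ξ, (((z ⬝ᵥ (ξ : Fin m → ℝ)) : ℝ) : EReal)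

/-- The constant `φ(q) = (q-1)^(q-1)/q^q` for `q > 1` and `φ(1) = 1`. -/
def phiq (q : ℝ) : ℝ := if q = 1 then 1 else (q - 1) ^ (q - 1) / q ^ q

/-- The term `φ(q) γ ‖u/γ‖_*^q`, with the limiting convention at `γ = 0`. -/
def perspDual (nrm : (Fin m → ℝ) → ℝ) (q γ : ℝ) (u : Fin m → ℝ) : EReal :=
  if γ = 0 then (if q = 1 then ((dualNorm nrm u : ℝ) : EReal) else if u = 0 then 0 else ⊤)
  else ((phiq q * (γ * dualNorm nrm (γ⁻¹ • u) ^ q) : ℝ) : EReal)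

/-- The perspective `α ‖θ/α‖^p` of the `p`-th power of the norm, with the limiting
convention `0 ‖θ/0‖^p = lim_{α ↓ 0} α ‖θ/α‖^p`. -/
def perspNorm (nrm : (Fin m → ℝ) → ℝ) (p : ℝ) (θ : Fin m → ℝ) (α : ℝ) : EReal :=
  if α = 0 then (if p = 1 then ((nrm θ : ℝ) : EReal) else if θ = 0 then 0 else ⊤)
  else ((α * nrm (α⁻¹ • θ) ^ p : ℝ) : EReal)

/-- The perspective `α f(x + θ/α)` of a loss, defined at `α = 0` as the value making it
upper semicontinuous there (the limit superior from `α > 0`). -/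
def perspLoss (f : (Fin m → ℝ) → EReal) (x θ : Fin m → ℝ) (α : ℝ) : EReal :=
  if α = 0 then
    Filter.limsup
      (fun pr : (Fin m → ℝ) × ℝ => (pr.2 : EReal) * f (x + pr.2⁻¹ • pr.1))
      ((nhds θ) ×ˢ (nhdsWithin 0 (Set.Ioi (0 : ℝ))))
  else (α : EReal) * f (x + α⁻¹ • θ)

/-- The recession cone of a set `Ξ ⊆ ℝ^m`. -/
def recessionCone (Ξ : Set (Fin m → ℝ)) : Set (Fin m → ℝ) :=
  {θ | ∀ ξ ∈ Ξ, ∀ t : ℝ, 0 ≤ t → ξ + t • θ ∈ Ξ}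

/-- The constraint `x + θ/α ∈ Ξ`, interpreted at `α = 0` as membership of `θ` in the
recession cone of `Ξ`. -/
def perspMem (Ξ : Set (Fin m → ℝ)) (x θ : Fin m → ℝ) (α : ℝ) : Prop :=
  if α = 0 then θ ∈ recessionCone Ξ else x + α⁻¹ • θ ∈ Ξ

/-- The standard Gaussian distribution on `ℝ^m`. -/
def stdGaussianPi (m : ℕ) : Measure (Fin m → ℝ) :=
  Measure.pi fun _ => ProbabilityTheory.gaussianReal 0 1

/-- The (possibly degenerate) normal distribution `𝒩(μ̂, Σ̂)` on `ℝ^m`. -/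
def mvNormal (muh : Fin m → ℝ) (Sh : Matrix (Fin m) (Fin m) ℝ) : Measure (Fin m → ℝ) :=
  (stdGaussianPi m).map (fun z => muh + (psdSqrt Sh).mulVec z)

/-- `- log det X`, valued `+∞` when `det X ≤ 0`. -/
def negLogDet (X : Matrix (Fin m) (Fin m) ℝ) : EReal :=
  if X.det ≤ 0 then ⊤ else ((-Real.log X.det : ℝ) : EReal)

/-- The hinge loss. -/
def hingeLoss (z : ℝ) : ℝ := max 0 (1 - z)

/-- The smooth hinge loss. -/
def smoothHingeLoss (z : ℝ) : ℝ :=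
  if z ≤ 0 then 1 / 2 - z else if z < 1 then (1 - z) ^ 2 / 2 else 0

/-- The logloss. -/
def logLoss (z : ℝ) : ℝ := Real.log (1 + Real.exp (-z))

/-- The input-output transportation cost with `κ = ∞`: moving mass between points with
different outputs is infinitely expensive. -/
def classDist (n : ℕ) (nrm : (Fin n → ℝ) → ℝ) (a b : (Fin n → ℝ) × ℝ) : ℝ≥0∞ :=
  if a.2 = b.2 then ENNReal.ofReal (nrm (a.1 - b.1)) else ⊤

/-- The type-1 Wasserstein distance on the input-output space for the cost `classDist`. -/
def W1class (n : ℕ) (nrm : (Fin n → ℝ) → ℝ) (Q Q' : Measure ((Fin n → ℝ) × ℝ)) : ℝ≥0∞ :=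
  ⨅ π ∈ Couplings Q Q', ∫⁻ pr, classDist n nrm pr.1 pr.2 ∂π

/-- The type-1 Wasserstein ball on the input-output space `ℝ^n × {-1, +1}`. -/
def classBall (n : ℕ) (nrm : (Fin n → ℝ) → ℝ) (ε : ℝ) (P : Measure ((Fin n → ℝ) × ℝ)) :
    Set (Measure ((Fin n → ℝ) × ℝ)) :=
  {Q | IsProbabilityMeasure Q ∧
    Q ({ξ : (Fin n → ℝ) × ℝ | ξ.2 = 1 ∨ ξ.2 = -1})ᶜ = 0 ∧
    W1class n nrm Q P ≤ ENNReal.ofReal ε}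

/-- The empirical distribution on `N` labeled samples. -/
def empiricalClass (n N : ℕ) (xs : Fin N → (Fin n → ℝ)) (ys : Fin N → ℝ) :
    Measure ((Fin n → ℝ) × ℝ) :=
  (N : ℝ≥0∞)⁻¹ • ∑ i, Measure.dirac (xs i, ys i)

/-- The distributionally robust maximum likelihood objective. -/
def mleObj (ε : ℝ) (muh : Fin m → ℝ) (Sh : Matrix (Fin m) (Fin m) ℝ)
    (mu : Fin m → ℝ) (X : Matrix (Fin m) (Fin m) ℝ) : EReal :=
  negLogDet X +
    ⨆ Q : (WBall eucNorm 2 ε Set.univ (mvNormal muh Sh)),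
      eexp Q.1 (fun ξ => (((ξ - mu) ⬝ᵥ X.mulVec (ξ - mu) : ℝ) : EReal))

end WDro
namespace WDro

-- ### Auxiliary lemmas

-- basic norm facts
lemma IsNorm.zero {nrm : (Fin m → ℝ) → ℝ} (h : IsNorm nrm) : nrm 0 = 0 :=
  (h.eq_zero_iff 0).2 rfl

lemma IsNorm.neg {nrm : (Fin m → ℝ) → ℝ} (h : IsNorm nrm) (x : Fin m → ℝ) :
    nrm (-x) = nrm x := by
  have := h.homog (-1) x
  simpa using this

lemma IsNorm.nonneg {nrm : (Fin m → ℝ) → ℝ} (h : IsNorm nrm) (x : Fin m → ℝ) :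
    0 ≤ nrm x := by
  have h1 := h.triangle x (-x)
  rw [add_neg_cancel, h.zero, h.neg] at h1
  linarith

lemma IsNorm.pos {nrm : (Fin m → ℝ) → ℝ} (h : IsNorm nrm) {x : Fin m → ℝ} (hx : x ≠ 0) :
    0 < nrm x :=
  lt_of_le_of_ne (h.nonneg x) (fun hc => hx ((h.eq_zero_iff x).1 hc.symm))

lemma IsNorm.sum_le {nrm : (Fin m → ℝ) → ℝ} (h : IsNorm nrm) {ι : Type*} (s : Finset ι)
    (f : ι → (Fin m → ℝ)) : nrm (∑ i ∈ s, f i) ≤ ∑ i ∈ s, nrm (f i) := by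
  classical
  induction s using Finset.cons_induction with
  | empty => simp [h.zero]
  | cons a s ha ih =>
    rw [Finset.sum_cons, Finset.sum_cons]
    exact le_trans (h.triangle _ _) (by linarith)

lemma IsNorm.le_const_mul {nrm : (Fin m → ℝ) → ℝ} (h : IsNorm nrm) :
    ∃ C : ℝ, 0 ≤ C ∧ ∀ x, nrm x ≤ C * ‖x‖ := by
  set e : Fin m → (Fin m → ℝ) := fun i => Pi.single i 1 with he
  refine ⟨∑ i : Fin m, nrm (e i), Finset.sum_nonneg fun i _ => h.nonneg _, fun x => ?_⟩
  have hx : x = ∑ i : Fin m, x i • e i := by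
    ext j; simp [he, Pi.single_apply]
  calc nrm x = nrm (∑ i : Fin m, x i • e i) := by rw [← hx]
    _ ≤ ∑ i : Fin m, nrm (x i • e i) := h.sum_le _ _
    _ ≤ ∑ i : Fin m, nrm (e i) * ‖x‖ := by
        refine Finset.sum_le_sum fun i _ => ?_
        rw [h.homog]
        have h1 : |x i| ≤ ‖x‖ := by simpa [Real.norm_eq_abs] using norm_le_pi_norm x i
        nlinarith [h.nonneg (e i)]
    _ = (∑ i : Fin m, nrm (e i)) * ‖x‖ := by rw [Finset.sum_mul]

lemma IsNorm.continuous {nrm : (Fin m → ℝ) → ℝ} (h : IsNorm nrm) : Continuous nrm := by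
  obtain ⟨C, hC0, hC⟩ := h.le_const_mul
  have hlip : LipschitzWith C.toNNReal nrm := by
    refine LipschitzWith.of_dist_le_mul fun x y => ?_
    have h1 : nrm x - nrm y ≤ nrm (x - y) := by
      have := h.triangle (x - y) y; simpa using this
    have h2 : nrm y - nrm x ≤ nrm (x - y) := by
      have := h.triangle (y - x) x
      rw [sub_add_cancel] at this
      have hn : nrm (y - x) = nrm (x - y) := by rw [← h.neg (y - x)]; congr 1; abel
      linarith [hn ▸ this]
    have : |nrm x - nrm y| ≤ nrm (x - y) := abs_le.2 ⟨by linarith, h1⟩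
    calc dist (nrm x) (nrm y) = |nrm x - nrm y| := Real.dist_eq _ _
      _ ≤ nrm (x - y) := this
      _ ≤ C * ‖x - y‖ := hC _
      _ = C.toNNReal * dist x y := by
          rw [Real.coe_toNNReal C hC0, dist_eq_norm]
  exact hlip.continuous

lemma IsNorm.const_mul_le {nrm : (Fin m → ℝ) → ℝ} (h : IsNorm nrm) :
    ∃ c : ℝ, 0 < c ∧ ∀ x, c * ‖x‖ ≤ nrm x := by
  by_cases hm : ∀ x : Fin m → ℝ, x = 0
  · exact ⟨1, one_pos, fun x => by rw [hm x]; simp [h.zero]⟩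
  push_neg at hm
  obtain ⟨x₀, hx₀⟩ := hm
  have hsph : (Metric.sphere (0 : Fin m → ℝ) 1).Nonempty := by
    refine ⟨‖x₀‖⁻¹ • x₀, ?_⟩
    have hx0 : ‖x₀‖ ≠ 0 := norm_ne_zero_iff.2 hx₀
    simp [norm_smul, abs_of_nonneg (inv_nonneg.2 (norm_nonneg x₀)), inv_mul_cancel₀ hx0]
  obtain ⟨z, hz, hzmin⟩ := (isCompact_sphere (0 : Fin m → ℝ) 1).exists_isMinOn hsph
    (h.continuous.continuousOn)
  have hz1 : ‖z‖ = 1 := by simpa using hz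
  have hzne : z ≠ 0 := by intro hc; rw [hc] at hz1; simp at hz1
  refine ⟨nrm z, h.pos hzne, fun x => ?_⟩
  rcases eq_or_ne x 0 with rfl | hx
  · simp [h.zero]
  have hxn : ‖x‖ ≠ 0 := norm_ne_zero_iff.2 hx
  have hu : ‖x‖⁻¹ • x ∈ Metric.sphere (0 : Fin m → ℝ) 1 := by
    simp [norm_smul, abs_of_nonneg (inv_nonneg.2 (norm_nonneg x)), inv_mul_cancel₀ hxn]
  have hmin := hzmin hu
  have : nrm (‖x‖⁻¹ • x) = ‖x‖⁻¹ * nrm x := by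
    rw [h.homog, abs_of_nonneg (inv_nonneg.2 (norm_nonneg x))]
  have hmin' : nrm z ≤ ‖x‖⁻¹ * nrm x := this ▸ hmin
  have hxpos : 0 < ‖x‖ := lt_of_le_of_ne (norm_nonneg x) (Ne.symm hxn)
  calc nrm z * ‖x‖ ≤ (‖x‖⁻¹ * nrm x) * ‖x‖ := by nlinarith
    _ = nrm x := by field_simp


lemma epos_coe (a : ℝ) : epos (a : EReal) = ENNReal.ofReal a := by
  rw [epos, if_neg (EReal.coe_ne_top a), EReal.toReal_coe]

lemma epos_top : epos ⊤ = ⊤ := if_pos rfl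

lemma epos_bot : epos ⊥ = 0 := by
  rw [epos, if_neg bot_ne_top]; simp

lemma epos_zero : epos 0 = 0 := by
  simpa using epos_coe 0

lemma measurable_epos : Measurable epos := by
  unfold epos
  exact Measurable.ite (measurableSet_singleton ⊤) measurable_const
    (ENNReal.measurable_ofReal.comp measurable_ereal_toReal)

lemma ofReal_max0 (s : ℝ) : ENNReal.ofReal (max s 0) = ENNReal.ofReal s := by
  rcases le_total s 0 with hs | hs
  · rw [max_eq_right hs, ENNReal.ofReal_zero, eq_comm, ENNReal.ofReal_eq_zero]; exact hs
  · rw [max_eq_left hs]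

/-- key pointwise inequality -/
lemma epos_key {a b : EReal} (ha : a ≠ ⊥) (hb : b ≠ ⊥) {c : ℝ≥0∞} (hc : c ≠ ⊤)
    (h : epos (a - b) ≤ c) :
    epos a ≤ epos b + c ∧ epos a + epos (-b) ≤ epos b + epos (-a) + c := by
  induction a using EReal.rec with
  | bot => exact absurd rfl ha
  | top =>
    induction b using EReal.rec with
    | bot => exact absurd rfl hb
    | top => constructor <;> simp [epos_top]
    | coe y =>
      exfalso
      rw [EReal.top_sub_coe, epos_top, top_le_iff] at h
      exact hc h
  | coe x =>
    induction b using EReal.rec with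
    | bot => exact absurd rfl hb
    | top => constructor <;> simp [epos_top]
    | coe y =>
      rw [← EReal.coe_sub, epos_coe] at h
      rw [epos_coe, ← EReal.coe_neg, ← EReal.coe_neg, epos_coe, epos_coe, epos_coe]
      constructor
      · calc ENNReal.ofReal x ≤ ENNReal.ofReal (y + (x - y)) := by
              apply ENNReal.ofReal_le_ofReal; linarith
          _ ≤ ENNReal.ofReal y + ENNReal.ofReal (x - y) := ENNReal.ofReal_add_le
          _ ≤ ENNReal.ofReal y + c := add_le_add_right h _
      · have key : max x 0 + max (-y) 0 ≤ max y 0 + max (-x) 0 + max (x - y) 0 := by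
          rcases le_total x 0 with h1 | h1 <;> rcases le_total y 0 with h2 | h2 <;>
            rcases le_total (x - y) 0 with h3 | h3 <;>
            simp [max_eq_left, max_eq_right, *] <;> linarith
        calc ENNReal.ofReal x + ENNReal.ofReal (-y)
            = ENNReal.ofReal (max x 0 + max (-y) 0) := by
              rw [ENNReal.ofReal_add (le_max_right _ _) (le_max_right _ _), ofReal_max0,
                ofReal_max0]
          _ ≤ ENNReal.ofReal (max y 0 + max (-x) 0 + max (x - y) 0) :=
              ENNReal.ofReal_le_ofReal key
          _ ≤ ENNReal.ofReal (max y 0 + max (-x) 0) + ENNReal.ofReal (max (x - y) 0) :=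
              ENNReal.ofReal_add_le
          _ = ENNReal.ofReal y + ENNReal.ofReal (-x) + ENNReal.ofReal (x - y) := by
              rw [ENNReal.ofReal_add (le_max_right _ _) (le_max_right _ _), ofReal_max0,
                ofReal_max0, ofReal_max0]
          _ ≤ ENNReal.ofReal y + ENNReal.ofReal (-x) + c := add_le_add_right h _

/-- L¹ ≤ Lᵖ for probability measures. -/
lemma lintegral_le_rpow {α : Type*} [MeasurableSpace α] (μ : Measure α) [IsProbabilityMeasure μ]
    {f : α → ℝ≥0∞} (hf : Measurable f) {p : ℝ} (hp : 1 ≤ p) :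
    ∫⁻ a, f a ∂μ ≤ (∫⁻ a, f a ^ p ∂μ) ^ (1 / p) := by
  rcases eq_or_lt_of_le hp with rfl | hp1
  · simp
  have hpq : p.HolderConjugate (p / (p - 1)) := Real.HolderConjugate.conjExponent hp1
  calc ∫⁻ a, f a ∂μ = ∫⁻ a, f a * 1 ∂μ := by simp
    _ ≤ (∫⁻ a, f a ^ p ∂μ) ^ (1 / p) * (∫⁻ a, (1 : ℝ≥0∞) ^ (p / (p - 1)) ∂μ) ^ (1 / (p / (p - 1))) :=
        ENNReal.lintegral_mul_le_Lp_mul_Lq μ hpq hf.aemeasurable aemeasurable_const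
    _ = (∫⁻ a, f a ^ p ∂μ) ^ (1 / p) := by
        simp [ENNReal.one_rpow, lintegral_const]


/-- thickened indicator aux is `1/δ`-Lipschitz in the `edist` sense. -/
lemma thickenedIndicatorAux_le_add {α : Type*} [PseudoEMetricSpace α] (δ : ℝ) (F : Set α)
    (x y : α) :
    thickenedIndicatorAux δ F x ≤ thickenedIndicatorAux δ F y + edist x y / ENNReal.ofReal δ := by
  unfold thickenedIndicatorAux
  have h0 : EMetric.infEdist y F ≤ EMetric.infEdist x F + edist x y := by
    rw [edist_comm]
    exact EMetric.infEdist_le_infEdist_add_edist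
  have hd : EMetric.infEdist y F / ENNReal.ofReal δ
      ≤ EMetric.infEdist x F / ENNReal.ofReal δ + edist x y / ENNReal.ofReal δ := by
    rw [← ENNReal.add_div]
    exact ENNReal.div_le_div_right h0 _
  calc (1 : ℝ≥0∞) - EMetric.infEdist x F / ENNReal.ofReal δ
      ≤ (1 - EMetric.infEdist y F / ENNReal.ofReal δ)
        + (EMetric.infEdist y F / ENNReal.ofReal δ - EMetric.infEdist x F / ENNReal.ofReal δ) :=
        tsub_le_tsub_add_tsub
    _ ≤ (1 - EMetric.infEdist y F / ENNReal.ofReal δ) + edist x y / ENNReal.ofReal δ := by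
        gcongr
        exact tsub_le_iff_left.2 (by rw [add_comm] at hd ⊢; exact hd)

/-- One-sided comparison of measures of closed sets from cheap couplings. -/
lemma measure_closed_le_of_couplings {Q P : Measure (Fin m → ℝ)}
    [IsProbabilityMeasure Q] [IsProbabilityMeasure P]
    (h : ∀ η : ℝ, 0 < η → ∃ π ∈ Couplings Q P,
      ∫⁻ z : (Fin m → ℝ) × (Fin m → ℝ), edist z.1 z.2 ∂π ≤ ENNReal.ofReal η)
    {F : Set (Fin m → ℝ)} (hF : IsClosed F) : Q F ≤ P F := by
  -- For each δ > 0, `Q F ≤ ∫⁻ thickenedIndicatorAux δ F dP`.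
  have main : ∀ δ : ℝ, 0 < δ → Q F ≤ ∫⁻ x, thickenedIndicatorAux δ F x ∂P := by
    intro δ hδ
    have hPle : ∫⁻ x, thickenedIndicatorAux δ F x ∂P ≤ 1 := by
      calc ∫⁻ x, thickenedIndicatorAux δ F x ∂P ≤ ∫⁻ _, 1 ∂P :=
            lintegral_mono fun x => thickenedIndicatorAux_le_one δ F x
        _ = 1 := by simp
    refine ENNReal.le_of_forall_pos_le_add fun η hη _ => ?_
    obtain ⟨π, ⟨hπprob, hπ1, hπ2⟩, hcost⟩ := h (η * δ) (by positivity)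
    have hg : Measurable (thickenedIndicatorAux δ F) :=
      (continuous_thickenedIndicatorAux hδ F).measurable
    have hQF : Q F ≤ ∫⁻ x, thickenedIndicatorAux δ F x ∂Q := by
      rw [← lintegral_indicator_one hF.measurableSet]
      exact lintegral_mono fun x => indicator_le_thickenedIndicatorAux δ F x
    have hmapQ : ∫⁻ x, thickenedIndicatorAux δ F x ∂Q
        = ∫⁻ z : (Fin m → ℝ) × (Fin m → ℝ), thickenedIndicatorAux δ F z.1 ∂π := by
      rw [← hπ1, lintegral_map hg measurable_fst]
    have hmapP : ∫⁻ x, thickenedIndicatorAux δ F x ∂P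
        = ∫⁻ z : (Fin m → ℝ) × (Fin m → ℝ), thickenedIndicatorAux δ F z.2 ∂π := by
      rw [← hπ2, lintegral_map hg measurable_snd]
    have hedist : Measurable fun z : (Fin m → ℝ) × (Fin m → ℝ) => edist z.1 z.2 :=
      measurable_edist
    have step : ∫⁻ z : (Fin m → ℝ) × (Fin m → ℝ), thickenedIndicatorAux δ F z.1 ∂π
        ≤ ∫⁻ z : (Fin m → ℝ) × (Fin m → ℝ), thickenedIndicatorAux δ F z.2 ∂π
          + (∫⁻ z : (Fin m → ℝ) × (Fin m → ℝ), edist z.1 z.2 ∂π) / ENNReal.ofReal δ := by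
      calc ∫⁻ z : (Fin m → ℝ) × (Fin m → ℝ), thickenedIndicatorAux δ F z.1 ∂π
          ≤ ∫⁻ z : (Fin m → ℝ) × (Fin m → ℝ),
              (thickenedIndicatorAux δ F z.2 + edist z.1 z.2 / ENNReal.ofReal δ) ∂π :=
            lintegral_mono fun z => thickenedIndicatorAux_le_add δ F z.1 z.2
        _ = ∫⁻ z : (Fin m → ℝ) × (Fin m → ℝ), thickenedIndicatorAux δ F z.2 ∂π
            + ∫⁻ z : (Fin m → ℝ) × (Fin m → ℝ), edist z.1 z.2 / ENNReal.ofReal δ ∂π :=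
            lintegral_add_left (hg.comp measurable_snd) _
        _ = _ := by
            simp only [div_eq_mul_inv]
            rw [lintegral_mul_const _ hedist]
    have hcost' : (∫⁻ z : (Fin m → ℝ) × (Fin m → ℝ), edist z.1 z.2 ∂π) / ENNReal.ofReal δ
        ≤ ENNReal.ofReal η := by
      calc _ ≤ ENNReal.ofReal (η * δ) / ENNReal.ofReal δ := by gcongr
        _ = ENNReal.ofReal η := by
            rw [ENNReal.ofReal_mul η.coe_nonneg, mul_comm,
              mul_div_assoc, ENNReal.mul_div_cancel (by simp [hδ]) ENNReal.ofReal_ne_top]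
    calc Q F ≤ _ := hQF
      _ = _ := hmapQ
      _ ≤ _ := step
      _ ≤ ∫⁻ z : (Fin m → ℝ) × (Fin m → ℝ), thickenedIndicatorAux δ F z.2 ∂π
          + ENNReal.ofReal η := add_le_add_right hcost' _
      _ = ∫⁻ x, thickenedIndicatorAux δ F x ∂P + ENNReal.ofReal η := by rw [hmapP]
      _ = ∫⁻ x, thickenedIndicatorAux δ F x ∂P + η := by
          rw [ENNReal.ofReal_coe_nnreal]
  -- Let δ → 0.
  have hten := tendsto_lintegral_thickenedIndicator_of_isClosed P hF
    (δs := fun n : ℕ => 1 / (n + 1)) (fun n => Nat.one_div_pos_of_nat)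
    tendsto_one_div_add_atTop_nhds_zero_nat
  refine ge_of_tendsto hten (Eventually.of_forall fun n => ?_)
  refine le_trans (main (1 / (n + 1)) Nat.one_div_pos_of_nat)
    (le_of_eq (lintegral_congr fun x => ?_))
  exact (ENNReal.coe_toNNReal thickenedIndicatorAux_lt_top.ne).symm

/-- Equality of measures from arbitrarily cheap couplings. -/
lemma measure_eq_of_couplings {Q P : Measure (Fin m → ℝ)}
    [IsProbabilityMeasure Q] [IsProbabilityMeasure P]
    (h : ∀ η : ℝ, 0 < η → ∃ π ∈ Couplings Q P,
      ∫⁻ z : (Fin m → ℝ) × (Fin m → ℝ), edist z.1 z.2 ∂π ≤ ENNReal.ofReal η) :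
    Q = P := by
  have hsymm : ∀ η : ℝ, 0 < η → ∃ π ∈ Couplings P Q,
      ∫⁻ z : (Fin m → ℝ) × (Fin m → ℝ), edist z.1 z.2 ∂π ≤ ENNReal.ofReal η := by
    intro η hη
    obtain ⟨π, ⟨hπprob, hπ1, hπ2⟩, hcost⟩ := h η hη
    refine ⟨π.map Prod.swap, ⟨?_, ?_, ?_⟩, ?_⟩
    · exact Measure.isProbabilityMeasure_map measurable_swap.aemeasurable
    · rw [Measure.map_map measurable_fst measurable_swap]
      exact hπ2
    · rw [Measure.map_map measurable_snd measurable_swap]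
      exact hπ1
    · rw [lintegral_map measurable_edist measurable_swap]
      simpa [edist_comm] using hcost
  have key : ∀ F : Set (Fin m → ℝ), IsClosed F → Q F = P F := fun F hF =>
    le_antisymm (measure_closed_le_of_couplings h hF) (measure_closed_le_of_couplings hsymm hF)
  refine MeasureTheory.ext_of_generate_finite _ ?_ isPiSystem_isClosed
    (fun F hF => key F hF) (key _ isClosed_univ)
  rw [BorelSpace.measurable_eq (α := Fin m → ℝ), borel_eq_generateFrom_isClosed]



-- ### Auxiliary lemmas for the main theorem

lemma sub_self_epos {a : EReal} (ha : a ≠ ⊥) : epos (a - a) = 0 := by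
  induction a using EReal.rec with
  | bot => exact absurd rfl ha
  | top =>
    show epos (⊤ + -⊤) = 0
    rw [EReal.neg_top, EReal.add_bot, epos_bot]
  | coe x => rw [← EReal.coe_sub, sub_self, epos_coe, ENNReal.ofReal_zero]

lemma exists_coupling_cost_lt {nrm : (Fin m → ℝ) → ℝ} {p ε : ℝ} (hp0 : 0 < p)
    {Q P : Measure (Fin m → ℝ)} (hQW : Wp nrm p Q P ≤ ENNReal.ofReal ε)
    {t : ℝ≥0∞} (ht : (ENNReal.ofReal ε) ^ p < t) :
    ∃ π ∈ Couplings Q P,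
      ∫⁻ ξ : (Fin m → ℝ) × (Fin m → ℝ), ENNReal.ofReal (nrm (ξ.1 - ξ.2) ^ p) ∂π < t := by
  rw [Wp] at hQW
  set I := ⨅ π ∈ Couplings Q P,
    ∫⁻ ξ : (Fin m → ℝ) × (Fin m → ℝ), ENNReal.ofReal (nrm (ξ.1 - ξ.2) ^ p) ∂π with hI
  have hIle : I ≤ (ENNReal.ofReal ε) ^ p := by
    calc I = (I ^ (1 / p)) ^ p := by
          rw [← ENNReal.rpow_mul, one_div_mul_cancel hp0.ne', ENNReal.rpow_one]
      _ ≤ (ENNReal.ofReal ε) ^ p := ENNReal.rpow_le_rpow hQW hp0.le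
  have : I < t := lt_of_le_of_lt hIle ht
  rw [hI, iInf_lt_iff] at this
  obtain ⟨π, hπ⟩ := this
  rw [iInf_lt_iff] at hπ
  obtain ⟨hπC, hπlt⟩ := hπ
  exact ⟨π, hπC, hπlt⟩

lemma cost_one_le {nrm : (Fin m → ℝ) → ℝ} (hnrm : IsNorm nrm) {p : ℝ} (hp : 1 ≤ p) {r : ℝ}
    {π : Measure ((Fin m → ℝ) × (Fin m → ℝ))} [IsProbabilityMeasure π]
    (hc : ∫⁻ ξ : (Fin m → ℝ) × (Fin m → ℝ), ENNReal.ofReal (nrm (ξ.1 - ξ.2) ^ p) ∂π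
      ≤ (ENNReal.ofReal r) ^ p) :
    ∫⁻ z : (Fin m → ℝ) × (Fin m → ℝ), ENNReal.ofReal (nrm (z.1 - z.2)) ∂π
      ≤ ENNReal.ofReal r := by
  have hp0 : (0 : ℝ) < p := lt_of_lt_of_le zero_lt_one hp
  have hmeash : Measurable (fun z : (Fin m → ℝ) × (Fin m → ℝ) =>
      ENNReal.ofReal (nrm (z.1 - z.2))) :=
    ENNReal.measurable_ofReal.comp
      ((hnrm.continuous.comp (continuous_fst.sub continuous_snd)).measurable)
  calc ∫⁻ z : (Fin m → ℝ) × (Fin m → ℝ), ENNReal.ofReal (nrm (z.1 - z.2)) ∂π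
      ≤ (∫⁻ z : (Fin m → ℝ) × (Fin m → ℝ), ENNReal.ofReal (nrm (z.1 - z.2)) ^ p ∂π) ^ (1 / p) :=
        lintegral_le_rpow π hmeash hp
    _ = (∫⁻ z : (Fin m → ℝ) × (Fin m → ℝ), ENNReal.ofReal (nrm (z.1 - z.2) ^ p) ∂π) ^ (1 / p) := by
        congr 1
        refine lintegral_congr fun z => ?_
        rw [ENNReal.ofReal_rpow_of_nonneg (hnrm.nonneg _) hp0.le]
    _ ≤ ((ENNReal.ofReal r) ^ p) ^ (1 / p) :=
        ENNReal.rpow_le_rpow hc (by positivity)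
    _ = ENNReal.ofReal r := by
        rw [← ENNReal.rpow_mul, mul_one_div_cancel hp0.ne', ENNReal.rpow_one]



/-- **Lipschitz regularization.** For any `p ∈ [1, ∞)`, radius `ε ≥ 0`, nominal distribution
`P` supported on a closed set `Ξ ⊆ ℝ^m` and upper semicontinuous `P`-integrable loss `ℓ`,
the worst-case risk over the type-`p` Wasserstein ball is bounded above by the
Lipschitz-regularized nominal risk. -/
theorem lipschitz_regularization {m : ℕ} (nrm : (Fin m → ℝ) → ℝ) (hnrm : IsNorm nrm)
    (p ε : ℝ) (hp : 1 ≤ p) (hε : 0 ≤ ε)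
    (Ξ : Set (Fin m → ℝ)) (hΞ : IsClosed Ξ)
    (P : Measure (Fin m → ℝ)) [IsProbabilityMeasure P] (hPsupp : P Ξᶜ = 0)
    (ℓ : (Fin m → ℝ) → EReal) (hbot : ∀ x, ℓ x ≠ ⊥)
    (husc : UpperSemicontinuous ℓ) (hint : IntegrableE P ℓ) :
    (⨆ Q : (WBall nrm p ε Ξ P), eexp Q.1 ℓ) ≤
      eexp P ℓ + ennToE (ENNReal.ofReal ε * lipModE nrm ℓ) := by
  classical
  obtain ⟨hmeas, hA', hB'⟩ := hint
  have hPexp : eexp P ℓ =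
      (((∫⁻ x, epos (ℓ x) ∂P).toReal - (∫⁻ x, epos (-(ℓ x)) ∂P).toReal : ℝ) : EReal) := by
    rw [eexp, if_neg hA', if_neg hB']
  set s : ℝ := (∫⁻ x, epos (ℓ x) ∂P).toReal - (∫⁻ x, epos (-(ℓ x)) ∂P).toReal with hs
  set L := lipModE nrm ℓ with hLdef
  have hp0 : (0 : ℝ) < p := lt_of_lt_of_le zero_lt_one hp
  have hmel : Measurable fun x => epos (ℓ x) := measurable_epos.comp hmeas
  have hmel' : Measurable fun x => epos (-(ℓ x)) :=
    measurable_epos.comp ((continuous_neg.measurable).comp hmeas)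
  have hmeash : Measurable (fun z : (Fin m → ℝ) × (Fin m → ℝ) =>
      ENNReal.ofReal (nrm (z.1 - z.2))) :=
    ENNReal.measurable_ofReal.comp
      ((hnrm.continuous.comp (continuous_fst.sub continuous_snd)).measurable)
  refine iSup_le ?_
  rintro ⟨Q, hQprob, hQsupp, hQW⟩
  haveI := hQprob
  simp only
  by_cases hLtop : L = ⊤
  · by_cases hε0 : ε = 0
    · -- radius 0 and infinite Lipschitz modulus: `Q = P`
      subst hε0
      obtain ⟨c, hc0, hc⟩ := hnrm.const_mul_le
      have hQP : Q = P := by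
        refine measure_eq_of_couplings (fun η hη => ?_)
        have ht : (ENNReal.ofReal (0:ℝ)) ^ p < (ENNReal.ofReal (c * η)) ^ p := by
          rw [ENNReal.ofReal_zero, ENNReal.zero_rpow_of_pos hp0]
          exact ENNReal.rpow_pos (ENNReal.ofReal_pos.2 (by positivity)) ENNReal.ofReal_ne_top
        obtain ⟨π, hπC, hπlt⟩ := exists_coupling_cost_lt hp0 hQW ht
        haveI := hπC.1
        have hcost1 := cost_one_le hnrm hp hπlt.le
        refine ⟨π, hπC, ?_⟩
        calc ∫⁻ z : (Fin m → ℝ) × (Fin m → ℝ), edist z.1 z.2 ∂π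
            ≤ ∫⁻ z : (Fin m → ℝ) × (Fin m → ℝ),
                ENNReal.ofReal c⁻¹ * ENNReal.ofReal (nrm (z.1 - z.2)) ∂π := by
              refine lintegral_mono fun z => ?_
              rw [edist_dist, ← ENNReal.ofReal_mul (by positivity)]
              refine ENNReal.ofReal_le_ofReal ?_
              rw [dist_eq_norm]
              have h2 := hc (z.1 - z.2)
              rw [inv_mul_eq_div, le_div_iff₀ hc0]
              linarith
          _ = ENNReal.ofReal c⁻¹
              * ∫⁻ z : (Fin m → ℝ) × (Fin m → ℝ), ENNReal.ofReal (nrm (z.1 - z.2)) ∂π :=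
              lintegral_const_mul _ hmeash
          _ ≤ ENNReal.ofReal c⁻¹ * ENNReal.ofReal (c * η) := by gcongr
          _ = ENNReal.ofReal η := by
              rw [← ENNReal.ofReal_mul (by positivity)]
              congr 1
              field_simp
      rw [hQP]
      have : ennToE (ENNReal.ofReal (0:ℝ) * L) = (0 : EReal) := by
        rw [ENNReal.ofReal_zero, zero_mul, ennToE, if_neg (by simp)]
        simp
      rw [this, add_zero]
    · -- infinite Lipschitz modulus and positive radius: right-hand side is `⊤`
      have hRtop : ENNReal.ofReal ε * L = ⊤ := by
        rw [hLtop, ENNReal.mul_top]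
        simpa using lt_of_le_of_ne hε (Ne.symm hε0)
      rw [hRtop]
      have : ennToE ⊤ = ⊤ := if_pos rfl
      rw [this, hPexp]
      rw [EReal.coe_add_top]
      exact le_top
  · -- finite Lipschitz modulus
    have key : ∀ e : ℝ, ε < e → eexp Q ℓ ≤ ((s + L.toReal * e : ℝ) : EReal) := by
      intro e he
      have he0 : (0:ℝ) < e := lt_of_le_of_lt hε he
      have ht : (ENNReal.ofReal ε) ^ p < (ENNReal.ofReal e) ^ p := by
        refine ENNReal.rpow_lt_rpow ?_ hp0
        exact (ENNReal.ofReal_lt_ofReal_iff he0).2 he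
      obtain ⟨π, hπC, hπlt⟩ := exists_coupling_cost_lt hp0 hQW ht
      obtain ⟨hπprob, hπ1, hπ2⟩ := hπC
      haveI := hπprob
      have hcost1 : ∫⁻ z : (Fin m → ℝ) × (Fin m → ℝ), ENNReal.ofReal (nrm (z.1 - z.2)) ∂π
          ≤ ENNReal.ofReal e := cost_one_le hnrm hp hπlt.le
      set K : ℝ≥0∞ := L * ∫⁻ z : (Fin m → ℝ) × (Fin m → ℝ), ENNReal.ofReal (nrm (z.1 - z.2)) ∂π
        with hK
      have hKtop : K ≠ ⊤ :=
        ENNReal.mul_ne_top hLtop (ne_top_of_le_ne_top ENNReal.ofReal_ne_top hcost1)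
      have hm1 : Measurable fun z : (Fin m → ℝ) × (Fin m → ℝ) => epos (ℓ z.1) :=
        hmel.comp measurable_fst
      have hm2 : Measurable fun z : (Fin m → ℝ) × (Fin m → ℝ) => epos (ℓ z.2) :=
        hmel.comp measurable_snd
      have hm1' : Measurable fun z : (Fin m → ℝ) × (Fin m → ℝ) => epos (-(ℓ z.1)) :=
        hmel'.comp measurable_fst
      -- pointwise Lipschitz estimate
      have hpt : ∀ z : (Fin m → ℝ) × (Fin m → ℝ),
          epos (ℓ z.1) ≤ epos (ℓ z.2) + L * ENNReal.ofReal (nrm (z.1 - z.2)) ∧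
          epos (ℓ z.1) + epos (-(ℓ z.2)) ≤
            epos (ℓ z.2) + epos (-(ℓ z.1)) + L * ENNReal.ofReal (nrm (z.1 - z.2)) := by
        intro z
        have hcz : L * ENNReal.ofReal (nrm (z.1 - z.2)) ≠ ⊤ :=
          ENNReal.mul_ne_top hLtop ENNReal.ofReal_ne_top
        refine epos_key (hbot _) (hbot _) hcz ?_
        rcases eq_or_ne z.1 z.2 with hzz | hzz
        · rw [hzz, sub_self_epos (hbot _)]
          exact zero_le
        · have hd0 : ENNReal.ofReal (nrm (z.1 - z.2)) ≠ 0 := by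
            simpa [ENNReal.ofReal_eq_zero, not_le] using hnrm.pos (sub_ne_zero.2 hzz)
          have hle : epos (ℓ z.1 - ℓ z.2) / ENNReal.ofReal (nrm (z.1 - z.2)) ≤ L := by
            rw [hLdef, lipModE]
            exact le_iSup_of_le z.1 (le_iSup_of_le z.2 (le_iSup_of_le hzz le_rfl))
          rw [ENNReal.div_le_iff hd0 ENNReal.ofReal_ne_top] at hle
          exact hle
      -- transfer the four integrals to the coupling
      have hAQ : ∫⁻ x, epos (ℓ x) ∂Q
          = ∫⁻ z : (Fin m → ℝ) × (Fin m → ℝ), epos (ℓ z.1) ∂π := by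
        rw [← hπ1, lintegral_map hmel measurable_fst]
      have hBQ : ∫⁻ x, epos (-(ℓ x)) ∂Q
          = ∫⁻ z : (Fin m → ℝ) × (Fin m → ℝ), epos (-(ℓ z.1)) ∂π := by
        rw [← hπ1, lintegral_map hmel' measurable_fst]
      have hAP : ∫⁻ x, epos (ℓ x) ∂P
          = ∫⁻ z : (Fin m → ℝ) × (Fin m → ℝ), epos (ℓ z.2) ∂π := by
        rw [← hπ2, lintegral_map hmel measurable_snd]
      have hBP : ∫⁻ x, epos (-(ℓ x)) ∂P
          = ∫⁻ z : (Fin m → ℝ) × (Fin m → ℝ), epos (-(ℓ z.2)) ∂π := by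
        rw [← hπ2, lintegral_map hmel' measurable_snd]
      -- first integrated inequality: positive part is finite
      have hAle : ∫⁻ x, epos (ℓ x) ∂Q ≤ ∫⁻ x, epos (ℓ x) ∂P + K := by
        rw [hAQ, hAP, hK]
        calc ∫⁻ z : (Fin m → ℝ) × (Fin m → ℝ), epos (ℓ z.1) ∂π
            ≤ ∫⁻ z : (Fin m → ℝ) × (Fin m → ℝ),
                (epos (ℓ z.2) + L * ENNReal.ofReal (nrm (z.1 - z.2))) ∂π :=
              lintegral_mono fun z => (hpt z).1
          _ = _ := by
              rw [lintegral_add_left hm2, lintegral_const_mul _ hmeash]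
      have hAfin : ∫⁻ x, epos (ℓ x) ∂Q ≠ ⊤ :=
        ne_top_of_le_ne_top (ENNReal.add_ne_top.2 ⟨hA', hKtop⟩) hAle
      -- second integrated inequality
      have hmain : ∫⁻ x, epos (ℓ x) ∂Q + ∫⁻ x, epos (-(ℓ x)) ∂P
          ≤ ∫⁻ x, epos (ℓ x) ∂P + ∫⁻ x, epos (-(ℓ x)) ∂Q + K := by
        rw [hAQ, hBQ, hAP, hBP, hK]
        calc ∫⁻ z : (Fin m → ℝ) × (Fin m → ℝ), epos (ℓ z.1) ∂π
              + ∫⁻ z : (Fin m → ℝ) × (Fin m → ℝ), epos (-(ℓ z.2)) ∂π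
            = ∫⁻ z : (Fin m → ℝ) × (Fin m → ℝ), (epos (ℓ z.1) + epos (-(ℓ z.2))) ∂π :=
              (lintegral_add_left hm1 _).symm
          _ ≤ ∫⁻ z : (Fin m → ℝ) × (Fin m → ℝ),
                (epos (ℓ z.2) + epos (-(ℓ z.1)) + L * ENNReal.ofReal (nrm (z.1 - z.2))) ∂π :=
              lintegral_mono fun z => (hpt z).2
          _ = _ := by
              rw [lintegral_add_left
                  (f := fun z : (Fin m → ℝ) × (Fin m → ℝ) => epos (ℓ z.2) + epos (-(ℓ z.1)))
                  (hm2.add hm1'), lintegral_add_left hm2,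
                lintegral_const_mul _ hmeash]
      -- conclude
      rw [eexp, if_neg hAfin]
      by_cases hBQtop : ∫⁻ x, epos (-(ℓ x)) ∂Q = ⊤
      · rw [if_pos hBQtop]
        exact bot_le
      rw [if_neg hBQtop]
      rw [EReal.coe_le_coe_iff]
      have hKle : K.toReal ≤ L.toReal * e := by
        rw [hK, ENNReal.toReal_mul]
        refine mul_le_mul_of_nonneg_left ?_ ENNReal.toReal_nonneg
        exact ENNReal.toReal_le_of_le_ofReal he0.le hcost1
      have hreal : (∫⁻ x, epos (ℓ x) ∂Q).toReal + (∫⁻ x, epos (-(ℓ x)) ∂P).toReal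
          ≤ (∫⁻ x, epos (ℓ x) ∂P).toReal + (∫⁻ x, epos (-(ℓ x)) ∂Q).toReal + K.toReal := by
        have h1 := ENNReal.toReal_le_toReal
          (ENNReal.add_ne_top.2 ⟨hAfin, hB'⟩)
          (ENNReal.add_ne_top.2 ⟨ENNReal.add_ne_top.2 ⟨hA', hBQtop⟩, hKtop⟩) |>.2 hmain
        rwa [ENNReal.toReal_add hAfin hB', ENNReal.toReal_add
          (ENNReal.add_ne_top.2 ⟨hA', hBQtop⟩) hKtop,
          ENNReal.toReal_add hA' hBQtop] at h1
      rw [hs]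
      linarith
    -- take the limit `e → ε⁺`
    have hfin : eexp Q ℓ ≤ ((s + L.toReal * ε : ℝ) : EReal) := by
      have hcont : Tendsto (fun e : ℝ => ((s + L.toReal * e : ℝ) : EReal))
          (nhdsWithin ε (Set.Ioi ε)) (nhds ((s + L.toReal * ε : ℝ) : EReal)) := by
        refine (continuous_coe_real_ereal.tendsto _).comp ?_
        exact ((continuous_const.add (continuous_const.mul continuous_id)).tendsto ε).mono_left
          nhdsWithin_le_nhds
      exact ge_of_tendsto hcont (eventually_nhdsWithin_of_forall fun e he => key e he)
    have hR : ennToE (ENNReal.ofReal ε * L) = ((L.toReal * ε : ℝ) : EReal) := by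
      rw [ennToE, if_neg (ENNReal.mul_ne_top ENNReal.ofReal_ne_top hLtop),
        ENNReal.toReal_mul, ENNReal.toReal_ofReal hε, mul_comm]
    rw [hPexp, hR, ← EReal.coe_add]
    exact hfin


end WDro
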